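/- Suppose X has no mean uncertainty over 𝒫, i.e. E_P[X] = μ_X for all P ∈ 𝒫. Let ρ_Y = (sup_P E_P[Y] + inf_P E_P[Y])/2. Then the upper covariance satisfies C̄(X,Y) := sup_{P∈conv(𝒫)} Cov_P(X,Y) = sup_{P∈𝒫} E_P[(X−μ_X)(Y−ρ_Y)], and the lower covariance satisfies C(X,Y) = inf_{P∈𝒫} E_P[(X−μ_X)(Y−ρ_Y)]. -/

import Mathlib

open MeasureTheory ENNReal

variable {Ω : Type*} [MeasurableSpace Ω]

/-- Classical covariance of `X` and `Y` under `P`. -/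
noncomputable def covP (P : Measure Ω) (X Y : Ω → ℝ) : ℝ :=
  (∫ ω, X ω * Y ω ∂P) - (∫ ω, X ω ∂P) * (∫ ω, Y ω ∂P)

/-- Classical variance of `X` under `P`. -/
noncomputable def varP (P : Measure Ω) (X : Ω → ℝ) : ℝ :=
  (∫ ω, (X ω) ^ 2 ∂P) - (∫ ω, X ω ∂P) ^ 2

/-- The convex hull of a set of measures: all finite convex combinations. -/
def convHullP (S : Set (Measure Ω)) : Set (Measure Ω) :=
  { Q | ∃ (n : ℕ) (w : Fin n → ℝ≥0∞) (P : Fin n → Measure Ω),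
      (∑ i, w i = 1) ∧ (∀ i, P i ∈ S) ∧ Q = ∑ i, w i • P i }


private lemma integrable_mul_of_L2 {P : Measure Ω} {f g : Ω → ℝ}
    (hf : MemLp f 2 P) (hg : MemLp g 2 P) :
    Integrable (fun ω => f ω * g ω) P := by
  refine Integrable.mono' ((hf.integrable_sq.add hg.integrable_sq).div_const 2)
    (hf.aestronglyMeasurable.mul hg.aestronglyMeasurable) ?_
  filter_upwards with ω
  have : |f ω * g ω| ≤ (f ω ^ 2 + g ω ^ 2) / 2 := by
    rw [abs_mul]
    nlinarith [sq_nonneg (|f ω| - |g ω|), sq_abs (f ω), sq_abs (g ω), abs_nonneg (f ω), abs_nonneg (g ω)]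
  simpa [Real.norm_eq_abs, abs_mul] using this

private lemma integrable_ennreal_smul {f : Ω → ℝ} {P : Measure Ω} {w : ℝ≥0∞} (hw : w ≠ ∞)
    (hf : Integrable f P) : Integrable f (w • P) := by
  rcases eq_or_ne w 0 with rfl | h0
  · simp
  · exact (integrable_smul_measure h0 hw).2 hf

/-- key identity: covariance equals centered second mixed moment when E[X]=μX. -/
private lemma covP_eq (P : Measure Ω) [IsProbabilityMeasure P] {X Y : Ω → ℝ}
    (hX : Integrable X P) (hY : Integrable Y P)
    (hXY : Integrable (fun ω => X ω * Y ω) P) {μX ρY : ℝ}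
    (hμ : ∫ ω, X ω ∂P = μX) :
    (∫ ω, X ω * Y ω ∂P) - (∫ ω, X ω ∂P) * (∫ ω, Y ω ∂P)
      = ∫ ω, (X ω - μX) * (Y ω - ρY) ∂P := by
  have e : ∀ ω, (X ω - μX) * (Y ω - ρY)
      = X ω * Y ω - ρY * X ω - μX * Y ω + μX * ρY := fun ω => by ring
  rw [show (fun ω => (X ω - μX) * (Y ω - ρY))
      = fun ω => X ω * Y ω - ρY * X ω - μX * Y ω + μX * ρY from funext e]
  have i1 : Integrable (fun ω => ρY * X ω) P := hX.const_mul ρY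
  have i2 : Integrable (fun ω => μX * Y ω) P := hY.const_mul μX
  have i3 : Integrable (fun ω => X ω * Y ω - ρY * X ω) P := hXY.sub i1
  have i4 : Integrable (fun ω => X ω * Y ω - ρY * X ω - μX * Y ω) P := i3.sub i2
  rw [integral_add i4 (integrable_const _), integral_sub i3 i2, integral_sub hXY i1,
    integral_const_mul, integral_const_mul, integral_const, hμ]
  simp
  ring

private lemma sum_weights_toReal {n : ℕ} {w : Fin n → ℝ≥0∞} (hw : ∑ i, w i = 1) :
    ∑ i, (w i).toReal = 1 := by
  rw [← ENNReal.toReal_sum (fun i _ => ne_top_of_le_ne_top one_ne_top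
    (Finset.single_le_sum (fun j _ => zero_le) (Finset.mem_univ i) |>.trans hw.le)), hw]
  simp

private lemma convex_sum_le {n : ℕ} (t a : Fin n → ℝ) (c : ℝ)
    (ht : ∀ i, 0 ≤ t i) (hsum : ∑ i, t i = 1) (ha : ∀ i, a i ≤ c) :
    ∑ i, t i * a i ≤ c := by
  calc ∑ i, t i * a i ≤ ∑ i, t i * c :=
        Finset.sum_le_sum fun i _ => mul_le_mul_of_nonneg_left (ha i) (ht i)
  _ = c := by rw [← Finset.sum_mul, hsum, one_mul]

private lemma le_convex_sum {n : ℕ} (t a : Fin n → ℝ) (c : ℝ)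
    (ht : ∀ i, 0 ≤ t i) (hsum : ∑ i, t i = 1) (ha : ∀ i, c ≤ a i) :
    c ≤ ∑ i, t i * a i := by
  have := convex_sum_le t (fun i => -a i) (-c) ht hsum (fun i => neg_le_neg (ha i))
  simp only [mul_neg, Finset.sum_neg_distrib] at this
  linarith

theorem stmt12 (S : Set (Measure Ω)) (hS : S.Nonempty)
    (hprob : ∀ P ∈ S, IsProbabilityMeasure P) (X Y : Ω → ℝ)
    (hXY : ∀ P ∈ S, MemLp X 2 P ∧ MemLp Y 2 P)
    (hbdd : BddAbove ((fun P => (∫ ω, (X ω) ^ 2 ∂P) + ∫ ω, (Y ω) ^ 2 ∂P) '' S))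
    (μX : ℝ) (hμX : ∀ P ∈ S, (∫ ω, X ω ∂P) = μX)
    (ρY : ℝ)
    (hρY : ρY = (sSup ((fun P => ∫ ω, Y ω ∂P) '' S) +
                  sInf ((fun P => ∫ ω, Y ω ∂P) '' S)) / 2) :
    sSup ((fun P => covP P X Y) '' convHullP S) =
      sSup ((fun P => ∫ ω, (X ω - μX) * (Y ω - ρY) ∂P) '' S) ∧
    sInf ((fun P => covP P X Y) '' convHullP S) =
      sInf ((fun P => ∫ ω, (X ω - μX) * (Y ω - ρY) ∂P) '' S) := by
  clear hρY
  set H : Ω → ℝ := fun ω => (X ω - μX) * (Y ω - ρY) with hH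
  set f : Measure Ω → ℝ := fun P => ∫ ω, H ω ∂P with hf
  set B : Set ℝ := f '' S with hB
  set A : Set ℝ := (fun P => covP P X Y) '' convHullP S with hA
  -- integrability on S
  have hIntX : ∀ P ∈ S, Integrable X P := fun P hP => by
    haveI := hprob P hP; exact (hXY P hP).1.integrable one_le_two
  have hIntY : ∀ P ∈ S, Integrable Y P := fun P hP => by
    haveI := hprob P hP; exact (hXY P hP).2.integrable one_le_two
  have hIntXY : ∀ P ∈ S, Integrable (fun ω => X ω * Y ω) P := fun P hP =>
    integrable_mul_of_L2 (hXY P hP).1 (hXY P hP).2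
  have hIntH : ∀ P ∈ S, Integrable H P := fun P hP => by
    haveI := hprob P hP
    exact integrable_mul_of_L2 ((hXY P hP).1.sub (memLp_const μX))
      ((hXY P hP).2.sub (memLp_const ρY))
  -- on S, covP = f
  have hcov : ∀ P ∈ S, covP P X Y = f P := fun P hP => by
    haveI := hprob P hP
    exact covP_eq P (hIntX P hP) (hIntY P hP) (hIntXY P hP) (hμX P hP)
  -- S ⊆ convHullP S
  have hsub : S ⊆ convHullP S := fun P hP =>
    ⟨1, fun _ => 1, fun _ => P, by simp, fun _ => hP, by simp⟩
  -- bound on B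
  obtain ⟨M, hM⟩ := hbdd
  have hBnd : ∀ P ∈ S, |f P| ≤ M + (μX ^ 2 + ρY ^ 2) := by
    intro P hP
    haveI := hprob P hP
    have h2X := (hXY P hP).1.integrable_sq
    have h2Y := (hXY P hP).2.integrable_sq
    have hb : Integrable (fun ω => X ω ^ 2 + Y ω ^ 2 + (μX ^ 2 + ρY ^ 2)) P :=
      (h2X.add h2Y).add (integrable_const _)
    have h1 : |f P| ≤ ∫ ω, |H ω| ∂P := by
      simpa [Real.norm_eq_abs] using norm_integral_le_integral_norm (μ := P) H
    have h2 : ∫ ω, |H ω| ∂P ≤ ∫ ω, (X ω ^ 2 + Y ω ^ 2 + (μX ^ 2 + ρY ^ 2)) ∂P := by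
      refine integral_mono (hIntH P hP).abs hb fun ω => ?_
      have hpt : |(X ω - μX) * (Y ω - ρY)| ≤ ((X ω - μX) ^ 2 + (Y ω - ρY) ^ 2) / 2 := by
        rw [abs_mul]
        nlinarith [sq_nonneg (|X ω - μX| - |Y ω - ρY|), sq_abs (X ω - μX), sq_abs (Y ω - ρY)]
      simp only [hH]
      nlinarith [hpt, sq_nonneg (X ω + μX), sq_nonneg (Y ω + ρY)]
    have h3 : ∫ ω, (X ω ^ 2 + Y ω ^ 2 + (μX ^ 2 + ρY ^ 2)) ∂P
        = (∫ ω, X ω ^ 2 ∂P) + (∫ ω, Y ω ^ 2 ∂P) + (μX ^ 2 + ρY ^ 2) := by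
      have hs : Integrable (fun ω => X ω ^ 2 + Y ω ^ 2) P := h2X.add h2Y
      rw [integral_add hs (integrable_const _), integral_add h2X h2Y, integral_const]
      simp
    have h4 : (∫ ω, X ω ^ 2 ∂P) + (∫ ω, Y ω ^ 2 ∂P) ≤ M := hM ⟨P, hP, rfl⟩
    linarith
  have hBne : B.Nonempty := hS.image f
  have hBA : BddAbove B := ⟨M + (μX ^ 2 + ρY ^ 2), by
    rintro b ⟨P, hP, rfl⟩; exact (abs_le.1 (hBnd P hP)).2⟩
  have hBB : BddBelow B := ⟨-(M + (μX ^ 2 + ρY ^ 2)), by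
    rintro b ⟨P, hP, rfl⟩; exact (abs_le.1 (hBnd P hP)).1⟩
  -- key estimates on the convex hull
  have hkey : ∀ Q ∈ convHullP S, sInf B ≤ covP Q X Y ∧ covP Q X Y ≤ sSup B := by
    rintro Q ⟨n, w, P, hw1, hPS, rfl⟩
    have hwt : ∀ i, w i ≠ ∞ := fun i => ne_top_of_le_ne_top one_ne_top
      ((Finset.single_le_sum (fun j _ => zero_le) (Finset.mem_univ i)).trans hw1.le)
    set Q : Measure Ω := ∑ i, w i • P i with hQ
    haveI : IsProbabilityMeasure Q := by
      constructor
      rw [hQ]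
      simp only [Measure.finset_sum_apply, Measure.smul_apply, smul_eq_mul]
      calc ∑ i, w i * (P i) Set.univ = ∑ i, w i := by
            refine Finset.sum_congr rfl fun i _ => ?_
            rw [(hprob _ (hPS i)).measure_univ, mul_one]
      _ = 1 := hw1
    have hiX : Integrable X Q := integrable_finset_sum_measure.2
      fun i _ => integrable_ennreal_smul (hwt i) (hIntX _ (hPS i))
    have hiY : Integrable Y Q := integrable_finset_sum_measure.2
      fun i _ => integrable_ennreal_smul (hwt i) (hIntY _ (hPS i))
    have hiXY : Integrable (fun ω => X ω * Y ω) Q := integrable_finset_sum_measure.2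
      fun i _ => integrable_ennreal_smul (hwt i) (hIntXY _ (hPS i))
    have hiH : Integrable H Q := integrable_finset_sum_measure.2
      fun i _ => integrable_ennreal_smul (hwt i) (hIntH _ (hPS i))
    have htw : ∑ i, (w i).toReal = 1 := sum_weights_toReal hw1
    have hiXv : ∫ ω, X ω ∂Q = μX := by
      rw [hQ, integral_finset_sum_measure
        (fun i _ => integrable_ennreal_smul (hwt i) (hIntX _ (hPS i)))]
      calc ∑ i, ∫ ω, X ω ∂(w i • P i) = ∑ i, (w i).toReal * μX := by
            refine Finset.sum_congr rfl fun i _ => ?_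
            rw [integral_smul_measure, hμX _ (hPS i), smul_eq_mul]
      _ = μX := by rw [← Finset.sum_mul, htw, one_mul]
    have hcovQ : covP Q X Y = ∑ i, (w i).toReal * f (P i) := by
      rw [show covP Q X Y = (∫ ω, X ω * Y ω ∂Q) - (∫ ω, X ω ∂Q) * (∫ ω, Y ω ∂Q) from rfl, covP_eq Q hiX hiY hiXY hiXv, hQ, integral_finset_sum_measure
        (fun i _ => integrable_ennreal_smul (hwt i) (hIntH _ (hPS i)))]
      refine Finset.sum_congr rfl fun i _ => ?_
      rw [integral_smul_measure, smul_eq_mul]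
    constructor
    · rw [hcovQ]
      exact le_convex_sum _ _ _ (fun i => ENNReal.toReal_nonneg) htw
        (fun i => csInf_le hBB ⟨P i, hPS i, rfl⟩)
    · rw [hcovQ]
      exact convex_sum_le _ _ _ (fun i => ENNReal.toReal_nonneg) htw
        (fun i => le_csSup hBA ⟨P i, hPS i, rfl⟩)
  have hAne : A.Nonempty := hS.mono hsub |>.image _
  have hBsubA : B ⊆ A := by
    rintro b ⟨P, hP, rfl⟩
    exact ⟨P, hsub hP, hcov P hP⟩
  have hAub : ∀ a ∈ A, a ≤ sSup B := by
    rintro a ⟨Q, hQ, rfl⟩; exact (hkey Q hQ).2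
  have hAlb : ∀ a ∈ A, sInf B ≤ a := by
    rintro a ⟨Q, hQ, rfl⟩; exact (hkey Q hQ).1
  constructor
  · exact le_antisymm (csSup_le hAne hAub)
      (csSup_le hBne fun b hb => le_csSup ⟨sSup B, hAub⟩ (hBsubA hb))
  · exact le_antisymm
      (le_csInf hBne fun b hb => csInf_le ⟨sInf B, hAlb⟩ (hBsubA hb))
      (le_csInf hAne hAlb)
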